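/- In the setting of the previous statement (disjoint I and B with survival weights ω_S on subsets of I and birth weights w_B on subsets of B), suppose J_1,…,J_K are the K subsets of I of largest ω_S-weight and L_1,…,L_M the M subsets of B of largest w_B-weight. Then the truncation keeping hypotheses {J_j ∪ L_m : 1≤j≤K, 1≤m≤M} incurs total discarded weight 1 − (∑_{j=1}^K ω_S(J_j))·(∑_{m=1}^M w_B(L_m)), and this truncation has minimal discarded weight among all truncations of product form T = {J∪L : J ∈ S, L ∈ B'} with |S| = K and |B'| = M. -/

import Mathlib

lemma topk_sum_max {β : Type*} [DecidableEq β] (P : Finset β) (f : β → ℝ)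
    (S S' : Finset β) (hS : S ⊆ P) (hS' : S' ⊆ P) (hcard : S'.card = S.card)
    (htop : ∀ x ∈ S, ∀ y ∈ P \ S, f y ≤ f x) :
    ∑ x ∈ S', f x ≤ ∑ x ∈ S, f x := by
  have hd : (S' \ S).card = (S \ S').card := Finset.card_sdiff_comm hcard
  have key : ∑ x ∈ S' \ S, f x ≤ ∑ x ∈ S \ S', f x := by
    by_cases hE : S \ S' = ∅
    · have : S' \ S = ∅ := Finset.card_eq_zero.mp (by rw [hd, hE]; simp)
      simp [this, hE]
    · obtain ⟨J₀, hJ₀, hmin⟩ := Finset.exists_min_image (S \ S') f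
        (Finset.nonempty_of_ne_empty hE)
      calc ∑ x ∈ S' \ S, f x ≤ (S' \ S).card • f J₀ := by
            apply Finset.sum_le_card_nsmul
            intro x hx
            apply htop J₀ (Finset.mem_sdiff.mp hJ₀).1
            rw [Finset.mem_sdiff] at hx ⊢
            exact ⟨hS' hx.1, hx.2⟩
        _ = (S \ S').card • f J₀ := by rw [hd]
        _ ≤ ∑ x ∈ S \ S', f x := Finset.card_nsmul_le_sum _ _ _ hmin
  calc ∑ x ∈ S', f x = ∑ x ∈ S' ∩ S, f x + ∑ x ∈ S' \ S, f x :=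
        (Finset.sum_inter_add_sum_sdiff _ _ _).symm
    _ ≤ ∑ x ∈ S ∩ S', f x + ∑ x ∈ S \ S', f x := by
        rw [Finset.inter_comm]; linarith [key]
    _ = ∑ x ∈ S, f x := Finset.sum_inter_add_sum_sdiff _ _ _

lemma sum_powerset_bernoulli {β : Type*} [DecidableEq β] (s : Finset β)
    (p : β → ℝ) (w : Finset β → ℝ)
    (hw : ∀ J, w J = (∏ ℓ ∈ J, p ℓ) * ∏ ℓ ∈ s \ J, (1 - p ℓ)) :
    ∑ J ∈ s.powerset, w J = 1 := by
  have h := Finset.prod_add p (fun ℓ => 1 - p ℓ) s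
  have h1 : ∏ ℓ ∈ s, (p ℓ + (1 - p ℓ)) = 1 := by simp
  rw [h1] at h
  rw [Finset.sum_congr rfl fun J _ => hw J, ← h]

/-- Separate truncation of survival and birth subsets: keeping the top-K
survival subsets and top-M birth subsets discards weight
`1 − (∑ ω_S)(∑ w_B)`, and this is minimal among product-form truncations. -/
theorem separate_truncation_optimal
    {α : Type*} [DecidableEq α] (I B : Finset α) (hIB : Disjoint I B)
    (η : α → ℝ) (hη : ∀ ℓ ∈ I, 0 < η ℓ ∧ η ℓ < 1)
    (r : α → ℝ) (hr : ∀ ℓ ∈ B, 0 < r ℓ ∧ r ℓ < 1)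
    (ωS : Finset α → ℝ) (wB : Finset α → ℝ)
    (hωS : ∀ J, ωS J = (∏ ℓ ∈ J, η ℓ) * ∏ ℓ ∈ I \ J, (1 - η ℓ))
    (hwB : ∀ L, wB L = (∏ ℓ ∈ L, r ℓ) * ∏ ℓ ∈ B \ L, (1 - r ℓ))
    (K M : ℕ)
    (𝒮 : Finset (Finset α)) (h𝒮 : 𝒮 ⊆ I.powerset) (h𝒮card : 𝒮.card = K)
    (htop𝒮 : ∀ J ∈ 𝒮, ∀ J' ∈ I.powerset \ 𝒮, ωS J' ≤ ωS J)
    (ℬ : Finset (Finset α)) (hℬ : ℬ ⊆ B.powerset) (hℬcard : ℬ.card = M)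
    (htopℬ : ∀ L ∈ ℬ, ∀ L' ∈ B.powerset \ ℬ, wB L' ≤ wB L) :
    (∑ C ∈ (I ∪ B).powerset \ (𝒮 ×ˢ ℬ).image (fun p => p.1 ∪ p.2),
        ωS (C ∩ I) * wB (C ∩ B)
      = 1 - (∑ J ∈ 𝒮, ωS J) * (∑ L ∈ ℬ, wB L))
    ∧ (∀ 𝒮' ⊆ I.powerset, 𝒮'.card = K → ∀ ℬ' ⊆ B.powerset, ℬ'.card = M →
        1 - (∑ J ∈ 𝒮, ωS J) * (∑ L ∈ ℬ, wB L)
          ≤ 1 - (∑ J ∈ 𝒮', ωS J) * (∑ L ∈ ℬ', wB L)) := by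
  have hS1 : ∑ J ∈ I.powerset, ωS J = 1 := sum_powerset_bernoulli I η ωS hωS
  have hB1 : ∑ L ∈ B.powerset, wB L = 1 := sum_powerset_bernoulli B r wB hwB
  have hωnn : ∀ J ∈ I.powerset, 0 ≤ ωS J := by
    intro J hJ
    rw [Finset.mem_powerset] at hJ
    rw [hωS]
    apply mul_nonneg
    · exact Finset.prod_nonneg fun ℓ hℓ => (hη ℓ (hJ hℓ)).1.le
    · exact Finset.prod_nonneg fun ℓ hℓ => by
        have := (hη ℓ (Finset.mem_sdiff.mp hℓ).1).2; linarith
  have hwnn : ∀ L ∈ B.powerset, 0 ≤ wB L := by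
    intro L hL
    rw [Finset.mem_powerset] at hL
    rw [hwB]
    apply mul_nonneg
    · exact Finset.prod_nonneg fun ℓ hℓ => (hr ℓ (hL hℓ)).1.le
    · exact Finset.prod_nonneg fun ℓ hℓ => by
        have := (hr ℓ (Finset.mem_sdiff.mp hℓ).1).2; linarith
  -- key set facts
  have hJcapI : ∀ J ∈ I.powerset, ∀ L ∈ B.powerset, (J ∪ L) ∩ I = J := by
    intro J hJ L hL
    rw [Finset.mem_powerset] at hJ hL
    have hLI : L ∩ I = ∅ := by
      apply Finset.eq_empty_of_forall_notMem
      intro x hx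
      rw [Finset.mem_inter] at hx
      exact (Finset.disjoint_left.mp hIB hx.2 (hL hx.1))
    rw [Finset.union_inter_distrib_right, Finset.inter_eq_left.mpr hJ, hLI,
      Finset.union_empty]
  have hLcapB : ∀ J ∈ I.powerset, ∀ L ∈ B.powerset, (J ∪ L) ∩ B = L := by
    intro J hJ L hL
    rw [Finset.mem_powerset] at hJ hL
    have hJB : J ∩ B = ∅ := by
      apply Finset.eq_empty_of_forall_notMem
      intro x hx
      rw [Finset.mem_inter] at hx
      exact (Finset.disjoint_left.mp hIB (hJ hx.1) hx.2)
    rw [Finset.union_inter_distrib_right, hJB, Finset.empty_union,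
      Finset.inter_eq_left.mpr hL]
  -- total sum over powerset (I ∪ B) equals 1
  have htotal : ∑ C ∈ (I ∪ B).powerset, ωS (C ∩ I) * wB (C ∩ B) = 1 := by
    rw [show (1:ℝ) = (∑ J ∈ I.powerset, ωS J) * (∑ L ∈ B.powerset, wB L) by
      rw [hS1, hB1, one_mul]]
    rw [Finset.sum_mul_sum, ← Finset.sum_product']
    apply Finset.sum_nbij' (fun C => (C ∩ I, C ∩ B)) (fun p => p.1 ∪ p.2)
    · intro C hC
      rw [Finset.mem_powerset] at hC
      simp only [Finset.mem_product, Finset.mem_powerset]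
      exact ⟨Finset.inter_subset_right, Finset.inter_subset_right⟩
    · intro p hp
      rw [Finset.mem_product] at hp
      rw [Finset.mem_powerset, Finset.mem_powerset] at hp
      rw [Finset.mem_powerset]
      exact Finset.union_subset_union hp.1 hp.2
    · intro C hC
      rw [Finset.mem_powerset] at hC
      rw [← Finset.inter_union_distrib_left, Finset.inter_eq_left.mpr hC]
    · intro p hp
      rw [Finset.mem_product] at hp
      exact Prod.ext (hJcapI _ hp.1 _ hp.2) (hLcapB _ hp.1 _ hp.2)
    · intro C hC; rfl
  -- the kept set is inside the powerset
  have himg : (𝒮 ×ˢ ℬ).image (fun p => p.1 ∪ p.2) ⊆ (I ∪ B).powerset := by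
    intro C hC
    rw [Finset.mem_image] at hC
    obtain ⟨p, hp, rfl⟩ := hC
    rw [Finset.mem_product] at hp
    rw [Finset.mem_powerset]
    exact Finset.union_subset_union
      (Finset.mem_powerset.mp (h𝒮 hp.1)) (Finset.mem_powerset.mp (hℬ hp.2))
  have hkept : ∑ C ∈ (𝒮 ×ˢ ℬ).image (fun p => p.1 ∪ p.2),
      ωS (C ∩ I) * wB (C ∩ B) = (∑ J ∈ 𝒮, ωS J) * (∑ L ∈ ℬ, wB L) := by
    rw [Finset.sum_image]
    · rw [Finset.sum_mul_sum, ← Finset.sum_product']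
      apply Finset.sum_congr rfl
      intro p hp
      rw [Finset.mem_product] at hp
      rw [hJcapI _ (h𝒮 hp.1) _ (hℬ hp.2), hLcapB _ (h𝒮 hp.1) _ (hℬ hp.2)]
    · intro p hp q hq heq
      rw [Finset.mem_coe, Finset.mem_product] at hp hq
      have h1 : p.1 = q.1 := by
        have := congrArg (· ∩ I) heq
        simpa [hJcapI _ (h𝒮 hp.1) _ (hℬ hp.2),
          hJcapI _ (h𝒮 hq.1) _ (hℬ hq.2)] using this
      have h2 : p.2 = q.2 := by
        have := congrArg (· ∩ B) heq
        simpa [hLcapB _ (h𝒮 hp.1) _ (hℬ hp.2),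
          hLcapB _ (h𝒮 hq.1) _ (hℬ hq.2)] using this
      exact Prod.ext h1 h2
  constructor
  · rw [Finset.sum_sdiff_eq_sub himg, htotal, hkept]
  · intro 𝒮' h𝒮' h𝒮'card ℬ' hℬ' hℬ'card
    have h1 : ∑ J ∈ 𝒮', ωS J ≤ ∑ J ∈ 𝒮, ωS J :=
      topk_sum_max I.powerset ωS 𝒮 𝒮' h𝒮 h𝒮' (h𝒮'card.trans h𝒮card.symm) htop𝒮
    have h2 : ∑ L ∈ ℬ', wB L ≤ ∑ L ∈ ℬ, wB L :=
      topk_sum_max B.powerset wB ℬ ℬ' hℬ hℬ' (hℬ'card.trans hℬcard.symm) htopℬ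
    have h3 : 0 ≤ ∑ L ∈ ℬ', wB L :=
      Finset.sum_nonneg fun L hL => hwnn L (hℬ' hL)
    have h4 : 0 ≤ ∑ J ∈ 𝒮, ωS J :=
      Finset.sum_nonneg fun J hJ => hωnn J (h𝒮 hJ)
    have := mul_le_mul h1 h2 h3 h4
    linarith
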